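/- Let d ≥ 2 and let G be the grid graph on vertex set {1,…,d}^d, in which two vertices are adjacent if and only if they differ by exactly 1 in exactly one coordinate and agree in all others. Then for every A ⊆ {1,…,d}^d, the number of edges of G with exactly one endpoint in A is at least |A|·(d^d − |A|)/d^{d+1}. -/

import Mathlib

open Filter Topology
open scoped Classical

noncomputable section

variable {V : Type*}

/-- Probability that the random subgraph `G(p)` lies in the event `A`. -/
noncomputable def percProb [Fintype V] [DecidableEq V] (G : SimpleGraph V) [DecidableRel G.Adj]
    (p : ℝ) (A : Set (Finset (Sym2 V))) : ℝ :=
  ∑ F ∈ G.edgeFinset.powerset,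
    if F ∈ A then p ^ F.card * (1 - p) ^ (G.edgeFinset.card - F.card) else 0

/-- Number of vertices in the component of `v` in the spanning subgraph with edge set `F`. -/
noncomputable def compCard [Fintype V] (F : Finset (Sym2 V)) (v : V) : ℕ :=
  Set.ncard {w | (SimpleGraph.fromEdgeSet (↑F : Set (Sym2 V))).Reachable v w}

/-- The ball of radius `r` around `w`. -/
def ball (G : SimpleGraph V) (w : V) (r : ℕ) : Set V :=
  {v | ∃ q : G.Walk w v, q.length ≤ r}

/-- The ball of radius `r` around a set `A`. -/
def setBall (G : SimpleGraph V) (A : Set V) (r : ℕ) : Set V :=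
  {v | ∃ u ∈ A, ∃ q : G.Walk u v, q.length ≤ r}

/-- `G` is a vertex `b`-expander. -/
def VertexExpander [Fintype V] (G : SimpleGraph V) (b : ℝ) : Prop :=
  ∀ A : Finset V, 0 < A.card → (A.card : ℝ) ≤ Fintype.card V / 2 →
    b * A.card ≤ (Set.ncard {v | v ∉ A ∧ ∃ u ∈ A, G.Adj u v} : ℝ)

/-- The set of edges of `G` with exactly one endpoint in `A`. -/
def edgeBoundary (G : SimpleGraph V) (A : Set V) : Set (Sym2 V) :=
  {e | e ∈ G.edgeSet ∧ ∃ u v : V, e = s(u, v) ∧ u ∈ A ∧ v ∉ A}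

/-- `G` is an edge `b`-expander. -/
def EdgeExpander [Fintype V] (G : SimpleGraph V) (b : ℝ) : Prop :=
  ∀ A : Finset V, 0 < A.card → (A.card : ℝ) ≤ Fintype.card V / 2 →
    b * A.card ≤ ((edgeBoundary G ↑A).ncard : ℝ)

/-- `e` is an `L`-bridge for configuration `F` (largeness threshold `c * |V|`). -/
def IsLBridge [Fintype V] (G : SimpleGraph V) (c : ℝ) (F : Finset (Sym2 V)) (e : Sym2 V) : Prop :=
  e ∈ G.edgeSet ∧ ∃ u v : V, e = s(u, v) ∧
    ¬ (SimpleGraph.fromEdgeSet (↑(F.erase e) : Set (Sym2 V))).Reachable u v ∧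
    c * Fintype.card V ≤ (compCard (F.erase e) u : ℝ) ∧
    c * Fintype.card V ≤ (compCard (F.erase e) v : ℝ)

/-- `F` has more than one component with at least `s` vertices. -/
def TwoLargeComponents [Fintype V] (F : Finset (Sym2 V)) (s : ℝ) : Prop :=
  ∃ v w : V, ¬ (SimpleGraph.fromEdgeSet (↑F : Set (Sym2 V))).Reachable v w ∧
    s ≤ (compCard F v : ℝ) ∧ s ≤ (compCard F w : ℝ)

/-- The edge-isoperimetric number (Cheeger constant) of `G`. -/
noncomputable def isoNumber [Fintype V] (G : SimpleGraph V) : ℝ :=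
  sInf {x : ℝ | ∃ A : Finset V, 0 < A.card ∧ (A.card : ℝ) ≤ Fintype.card V / 2 ∧
    x = ((edgeBoundary G ↑A).ncard : ℝ) / A.card}


/-- The grid graph on `{1, ..., d}^d`: two vertices are adjacent iff they differ by
exactly `1` in exactly one coordinate and agree in all others. -/
def gridGraph (d : ℕ) : SimpleGraph (Fin d → Fin d) where
  Adj u v := ∃ i, (((u i : ℕ) + 1 = (v i : ℕ)) ∨ ((v i : ℕ) + 1 = (u i : ℕ))) ∧
    ∀ j, j ≠ i → u j = v j
  symm := by
    refine ⟨?_⟩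
    rintro u v ⟨i, h1, h2⟩
    exact ⟨i, h1.symm, fun j hj => (h2 j hj).symm⟩
  loopless := by
    refine ⟨?_⟩
    rintro u ⟨i, h1, -⟩
    rcases h1 with h | h <;> omega


lemma grid_key_lemma {d : ℕ} (A : Finset (Fin d → Fin d)) :
    ∀ n : ℕ, ∀ u v : Fin d → Fin d, (∑ j, Nat.dist (u j) (v j)) ≤ n →
      u ∈ A → v ∉ A → ∀ i₀ : ℕ, (∀ j : Fin d, (j : ℕ) < i₀ → u j = v j) →
      ∃ (x y : Fin d → Fin d) (i : Fin d), x ∈ A ∧ y ∉ A ∧ i₀ ≤ (i : ℕ) ∧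
        (((x i : ℕ) + 1 = (y i : ℕ)) ∨ ((y i : ℕ) + 1 = (x i : ℕ))) ∧
        (∀ j, j ≠ i → x j = y j) ∧
        (∀ j : Fin d, (j : ℕ) < (i : ℕ) → x j = v j) ∧
        (∀ j : Fin d, (i : ℕ) < (j : ℕ) → x j = u j) := by
  intro n
  induction n with
  | zero =>
    intro u v hsum hu hv i₀ h0
    exfalso
    apply hv
    have huv : u = v := by
      funext j
      have hj := Finset.sum_eq_zero_iff.mp (Nat.le_zero.mp hsum) j (Finset.mem_univ j)
      exact Fin.ext (Nat.eq_of_dist_eq_zero hj)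
    rwa [huv] at hu
  | succ m ih =>
    intro u v hsum hu hv i₀ h0
    have hne : u ≠ v := fun h => hv (h ▸ hu)
    have hex : (Finset.univ.filter fun i => u i ≠ v i).Nonempty := by
      rcases Function.ne_iff.mp hne with ⟨i, hi⟩
      exact ⟨i, by simp [hi]⟩
    set i := (Finset.univ.filter fun i => u i ≠ v i).min' hex with hidef
    have hi : u i ≠ v i := by
      have := (Finset.univ.filter fun i => u i ≠ v i).min'_mem hex
      simpa using this
    have hmin : ∀ j : Fin d, u j ≠ v j → i ≤ j := fun j hj =>
      Finset.min'_le _ j (by simp [hj])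
    have hminlt : ∀ j : Fin d, (j : ℕ) < (i : ℕ) → u j = v j := by
      intro j hj
      by_contra hc
      exact absurd (hmin j hc) (by simpa using hj)
    have hi0 : i₀ ≤ (i : ℕ) := by
      by_contra hc
      exact hi (h0 i (by omega))
    -- the step in coordinate i towards v
    have hvi : (v i : ℕ) < d := (v i).isLt
    have hui : (u i : ℕ) < d := (u i).isLt
    set w : Fin d := if h : (u i : ℕ) < (v i : ℕ) then ⟨(u i : ℕ) + 1, by omega⟩
      else ⟨(u i : ℕ) - 1, by omega⟩ with hwdef
    have hival : (u i : ℕ) ≠ (v i : ℕ) := fun h => hi (Fin.ext h)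
    have hadj : ((u i : ℕ) + 1 = (w : ℕ)) ∨ ((w : ℕ) + 1 = (u i : ℕ)) := by
      by_cases h : (u i : ℕ) < (v i : ℕ)
      · left; simp [hwdef, h]
      · right; simp [hwdef, h]; omega
    have hdist : Nat.dist (w : ℕ) (v i : ℕ) < Nat.dist (u i : ℕ) (v i : ℕ) := by
      by_cases h : (u i : ℕ) < (v i : ℕ) <;>
        simp [hwdef, h, Nat.dist] <;> omega
    set u' := Function.update u i w with hu'def
    have hsum' : (∑ j, Nat.dist (u' j) (v j)) ≤ m := by
      have hlt : (∑ j, Nat.dist (u' j) (v j)) < ∑ j, Nat.dist (u j) (v j) := by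
        apply Finset.sum_lt_sum
        · intro j _
          by_cases hji : j = i
          · subst hji; simp [hu'def]; exact le_of_lt hdist
          · simp [hu'def, Function.update_of_ne hji]
        · exact ⟨i, Finset.mem_univ i, by simpa [hu'def] using hdist⟩
      omega
    by_cases hA' : u' ∈ A
    · -- recurse
      have h0' : ∀ j : Fin d, (j : ℕ) < (i : ℕ) → u' j = v j := by
        intro j hj
        have : j ≠ i := fun h => by simp [h] at hj
        rw [hu'def, Function.update_of_ne this]
        exact hminlt j hj
      obtain ⟨x, y, i', hx, hy, hii', hrest⟩ := ih u' v hsum' hA' hv (i : ℕ) h0'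
      refine ⟨x, y, i', hx, hy, by omega, hrest.1, hrest.2.1, hrest.2.2.1, ?_⟩
      intro j hj
      have hji : j ≠ i := by
        intro h; subst h; omega
      rw [hrest.2.2.2 j hj, hu'def, Function.update_of_ne hji]
    · -- the edge (u, u') is a boundary edge
      refine ⟨u, u', i, hu, hA', hi0, ?_, ?_, hminlt, fun j _ => rfl⟩
      · simpa [hu'def] using hadj
      · intro j hj; rw [hu'def, Function.update_of_ne hj]

theorem grid_edge_isoperimetry_general
    (d : ℕ) (hd : 2 ≤ d) (A : Finset (Fin d → Fin d)) :
    (A.card : ℝ) * ((d : ℝ) ^ d - A.card) / (d : ℝ) ^ (d + 1)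
      ≤ ((edgeBoundary (gridGraph d) ↑A).ncard : ℝ) := by
  have hd0 : 0 < d := by omega
  have hcardV : Fintype.card (Fin d → Fin d) = d ^ d := by
    simp [Fintype.card_fun]
  set B := edgeBoundary (gridGraph d) (↑A : Set (Fin d → Fin d)) with hBdef
  have hBfin : B.Finite := Set.toFinite _
  -- the witness structure for pairs (u,v) with u ∈ A, v ∉ A
  have hkey : ∀ p : (Fin d → Fin d) × (Fin d → Fin d), p.1 ∈ A → p.2 ∉ A →
      ∃ z : (Fin d → Fin d) × (Fin d → Fin d) × Fin d,
        z.1 ∈ A ∧ z.2.1 ∉ A ∧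
        (((z.1 z.2.2 : ℕ) + 1 = (z.2.1 z.2.2 : ℕ)) ∨
          ((z.2.1 z.2.2 : ℕ) + 1 = (z.1 z.2.2 : ℕ))) ∧
        (∀ j, j ≠ z.2.2 → z.1 j = z.2.1 j) ∧
        (∀ j : Fin d, (j : ℕ) < (z.2.2 : ℕ) → z.1 j = p.2 j) ∧
        (∀ j : Fin d, (z.2.2 : ℕ) < (j : ℕ) → z.1 j = p.1 j) := by
    intro p h1 h2
    obtain ⟨x, y, i, hx, hy, -, h3, h4, h5, h6⟩ :=
      grid_key_lemma A (∑ j, Nat.dist (p.1 j) (p.2 j)) p.1 p.2 le_rfl h1 h2 0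
        (by intro j hj; omega)
    exact ⟨(x, y, i), hx, hy, h3, h4, h5, h6⟩
  set f : (Fin d → Fin d) × (Fin d → Fin d) → Sym2 (Fin d → Fin d) :=
    fun p => if h : p.1 ∈ A ∧ p.2 ∉ A then
      s((hkey p h.1 h.2).choose.1, (hkey p h.1 h.2).choose.2.1) else s(p.1, p.1)
    with hfdef
  -- main counting inequality over ℕ
  have hnat : A.card * Aᶜ.card ≤ d ^ (d + 1) * hBfin.toFinset.card := by
    rw [← Finset.card_product]
    apply Finset.card_le_mul_card_image_of_maps_to (f := f)
    · -- maps to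
      rintro ⟨u, v⟩ hp
      rw [Finset.mem_product] at hp
      have h1 : u ∈ A := hp.1
      have h2 : v ∉ A := by simpa using hp.2
      obtain ⟨hx, hy, h3, h4, h5, h6⟩ := (hkey (u, v) h1 h2).choose_spec
      set z := (hkey (u, v) h1 h2).choose
      rw [Set.Finite.mem_toFinset]
      have : f (u, v) = s(z.1, z.2.1) := by
        rw [hfdef]; exact dif_pos ⟨h1, h2⟩
      rw [this, hBdef]
      refine ⟨⟨z.2.2, h3, h4⟩, z.1, z.2.1, rfl, hx, hy⟩
    · -- fibers are small
      intro e he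
      set Fib := {p ∈ A ×ˢ Aᶜ | f p = e} with hFibdef
      rcases Fib.eq_empty_or_nonempty with hFe | ⟨p₀, hp₀⟩
      · rw [hFe]; simp
      -- witness of p₀ gives the canonical (x, y, i) for this edge
      have hp₀' := hp₀
      rw [hFibdef, Finset.mem_filter, Finset.mem_product] at hp₀'
      obtain ⟨⟨hp₀1, hp₀2'⟩, hfp₀⟩ := hp₀'
      have hp₀2 : p₀.2 ∉ A := by simpa using hp₀2'
      obtain ⟨hx, hy, h3, h4, -, -⟩ := (hkey p₀ hp₀1 hp₀2).choose_spec
      set x := (hkey p₀ hp₀1 hp₀2).choose.1 with hxdef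
      set y := (hkey p₀ hp₀1 hp₀2).choose.2.1 with hydef
      set i := (hkey p₀ hp₀1 hp₀2).choose.2.2 with hidef
      have hfe : e = s(x, y) := by
        rw [← hfp₀, hfdef]
        have : p₀.1 ∈ A ∧ p₀.2 ∉ A := ⟨hp₀1, hp₀2⟩
        exact dif_pos this
      have hxyi : x i ≠ y i := by
        intro h
        rw [h] at h3; omega
      -- every pair in the fiber has the same witness data
      have hfib : ∀ p ∈ Fib, (∀ j : Fin d, (i : ℕ) < (j : ℕ) → p.1 j = x j) ∧
          (∀ j : Fin d, (j : ℕ) < (i : ℕ) → p.2 j = x j) := by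
        intro p hp
        rw [hFibdef, Finset.mem_filter, Finset.mem_product] at hp
        obtain ⟨⟨hq1, hq2'⟩, hfq⟩ := hp
        have hq2 : p.2 ∉ A := by simpa using hq2'
        obtain ⟨hx', hy', h3', h4', h5', h6'⟩ := (hkey p hq1 hq2).choose_spec
        set x' := (hkey p hq1 hq2).choose.1 with hx'def
        set y' := (hkey p hq1 hq2).choose.2.1 with hy'def
        set i' := (hkey p hq1 hq2).choose.2.2 with hi'def
        have hfe' : e = s(x', y') := by
          rw [← hfq, hfdef]
          have : p.1 ∈ A ∧ p.2 ∉ A := ⟨hq1, hq2⟩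
          exact dif_pos this
        have hss : s(x', y') = s(x, y) := by rw [← hfe', hfe]
        rw [Sym2.eq_iff] at hss
        have hxx : x' = x ∧ y' = y := by
          rcases hss with h | ⟨ha, hb⟩
          · exact h
          · exact absurd (ha ▸ hx') hy
        obtain ⟨hxx', hyy'⟩ := hxx
        have hii' : i' = i := by
          by_contra hc
          have := h4 i' hc
          rw [← hxx', ← hyy'] at this
          rw [this] at h3'; omega
        constructor
        · intro j hj
          rw [← hxx']
          exact (h6' j (by omega)).symm
        · intro j hj
          rw [← hxx']
          exact (h5' j (by omega)).symm
      -- count the fiber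
      have hsub : Fib ⊆
          (Finset.univ.filter fun u : Fin d → Fin d => ∀ j : Fin d, (i : ℕ) < (j : ℕ) → u j = x j) ×ˢ
          (Finset.univ.filter fun v : Fin d → Fin d => ∀ j : Fin d, (j : ℕ) < (i : ℕ) → v j = x j) := by
        intro p hp
        rw [Finset.mem_product]
        obtain ⟨ha, hb⟩ := hfib p hp
        exact ⟨by simpa using ha, by simpa using hb⟩
      have hcard1 : (Finset.univ.filter fun u : Fin d → Fin d =>
          ∀ j : Fin d, (i : ℕ) < (j : ℕ) → u j = x j).card ≤ d ^ ((i : ℕ) + 1) := by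
        have hilt : (i : ℕ) < d := i.isLt
        have h2 : (Finset.univ : Finset (Fin ((i : ℕ) + 1) → Fin d)).card
            = d ^ ((i : ℕ) + 1) := by simp [Fintype.card_fun]
        rw [← h2]
        have hle : (i : ℕ) + 1 ≤ d := hilt
        apply Finset.card_le_card_of_injOn
          (fun (u : Fin d → Fin d) (k : Fin ((i : ℕ) + 1)) => u (Fin.castLE hle k))
          (fun _ _ => Finset.mem_univ _)
        intro u1 hu1 u2 hu2 h
        simp only [Finset.coe_filter, Set.mem_setOf_eq] at hu1 hu2
        funext j
        by_cases hj : (j : ℕ) < (i : ℕ) + 1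
        · have := congrFun h ⟨(j : ℕ), hj⟩
          simpa using this
        · rw [hu1.2 j (by omega), hu2.2 j (by omega)]
      have hcard2 : (Finset.univ.filter fun v : Fin d → Fin d =>
          ∀ j : Fin d, (j : ℕ) < (i : ℕ) → v j = x j).card ≤ d ^ (d - (i : ℕ)) := by
        have hilt : (i : ℕ) < d := i.isLt
        have h2 : (Finset.univ : Finset (Fin (d - (i : ℕ)) → Fin d)).card
            = d ^ (d - (i : ℕ)) := by simp [Fintype.card_fun]
        rw [← h2]
        have hce : (i : ℕ) + (d - (i : ℕ)) = d := Nat.add_sub_cancel' (le_of_lt hilt)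
        apply Finset.card_le_card_of_injOn
          (fun (v : Fin d → Fin d) (k : Fin (d - (i : ℕ))) => v (Fin.cast hce (Fin.natAdd (i : ℕ) k)))
          (fun _ _ => Finset.mem_univ _)
        intro v1 hv1 v2 hv2 h
        simp only [Finset.coe_filter, Set.mem_setOf_eq] at hv1 hv2
        funext j
        by_cases hj : (j : ℕ) < (i : ℕ)
        · rw [hv1.2 j hj, hv2.2 j hj]
        · have hk : (j : ℕ) - (i : ℕ) < d - (i : ℕ) := Nat.sub_lt_sub_right (Nat.le_of_not_lt hj) j.isLt
          have := congrFun h ⟨(j : ℕ) - (i : ℕ), hk⟩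
          simp only at this
          have hji : (i : ℕ) + ((j : ℕ) - (i : ℕ)) = (j : ℕ) := Nat.add_sub_cancel' (Nat.le_of_not_lt hj)
          have hjj : Fin.cast hce (Fin.natAdd (i : ℕ) ⟨(j : ℕ) - (i : ℕ), hk⟩) = j :=
            Fin.ext (by simpa using hji)
          rw [hjj] at this
          exact this
      calc Fib.card ≤ _ := Finset.card_le_card hsub
        _ ≤ d ^ ((i : ℕ) + 1) * d ^ (d - (i : ℕ)) := by
            rw [Finset.card_product]
            exact Nat.mul_le_mul hcard1 hcard2
        _ = d ^ (d + 1) := by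
            rw [← pow_add]
            congr 1
            rw [Nat.add_right_comm, Nat.add_sub_cancel' (le_of_lt i.isLt)]
  -- convert to the real statement
  have hAle : A.card ≤ d ^ d := by
    have := Finset.card_le_univ A
    rwa [hcardV] at this
  have hcompl : Aᶜ.card = d ^ d - A.card := by
    rw [Finset.card_compl, hcardV]
  have hpow : (0 : ℝ) < (d : ℝ) ^ (d + 1) := by positivity
  rw [div_le_iff₀ hpow]
  have hBcard : ((B.ncard : ℝ)) = (hBfin.toFinset.card : ℝ) := by
    rw [Set.ncard_eq_toFinset_card B hBfin]
  calc (A.card : ℝ) * ((d : ℝ) ^ d - A.card)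
      = ((A.card * Aᶜ.card : ℕ) : ℝ) := by
        rw [hcompl]; push_cast [hAle]; ring
    _ ≤ ((d ^ (d + 1) * hBfin.toFinset.card : ℕ) : ℝ) := by exact_mod_cast hnat
    _ = (hBfin.toFinset.card : ℝ) * (d : ℝ) ^ (d + 1) := by push_cast; ring
    _ = (B.ncard : ℝ) * (d : ℝ) ^ (d + 1) := by rw [hBcard]


end
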